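/- arXiv:2503.00300 — 4 statements merged into one kernel-verified Lean document; each statement's English description precedes it below -/
import Mathlib

section
/- Let B ∈ ℂ^{m×m} be the self-adjoint matrix with B_{j,j}=0 and B_{j,k}=exp(−γ‖x_j−x_k‖₁) for j≠k, where the points x_1,…,x_m ∈ ℝ^d satisfy ‖x_j−x_k‖₂ ≥ K for j≠k. If γ ≥ (1/K)log(m/η) then ‖B‖₂ ≤ η. -/
open scoped BigOperators Matrix Matrix.Norms.L2Operator

noncomputable section

/-- for the self-adjoint matrix `B` with zero diagonal and off-diagonal entries
`B_{j,k} = exp(−γ‖x_j−x_k‖₁)` for `K`-separated points (in the Euclidean norm), if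
`γ ≥ (1/K) log(m/η)` then `‖B‖₂ ≤ η`. -/
theorem offdiagonal_laplace_kernel_norm_bound
    {d m : ℕ} (hm : 0 < m) (x : Fin m → EuclideanSpace ℝ (Fin d))
    (γ K η : ℝ) (hγ : 0 < γ) (hK : 0 < K) (hη : 0 < η)
    (hsep : ∀ j k : Fin m, j ≠ k → K ≤ ‖x j - x k‖)
    (hγK : K⁻¹ * Real.log (m / η) ≤ γ)
    (B : Matrix (Fin m) (Fin m) ℂ)
    (hBdiag : ∀ j, B j j = 0)
    (hBoff : ∀ j k, j ≠ k →
      B j k = Real.exp (-γ * ∑ i, |x j i - x k i|)) :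
    ‖B‖ ≤ η := by
  have hm' : (0:ℝ) < m := by exact_mod_cast hm
  -- entrywise bound
  have hε : Real.exp (-(γ * K)) ≤ η / m := by
    have h1 : Real.log (m / η) ≤ γ * K := by
      have := mul_le_mul_of_nonneg_right hγK hK.le
      rwa [inv_mul_eq_div, div_mul_cancel₀ _ hK.ne'] at this
    calc Real.exp (-(γ * K)) ≤ Real.exp (-(Real.log (m / η))) := by
          exact Real.exp_le_exp.mpr (by linarith)
      _ = η / m := by
          rw [Real.exp_neg, Real.exp_log (by positivity), inv_div]
  have hentry : ∀ j k, ‖B j k‖ ≤ η / m := by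
    intro j k
    rcases eq_or_ne j k with rfl | hjk
    · simp [hBdiag j]; positivity
    · rw [hBoff j k hjk]
      have hl1 : K ≤ ∑ i, |x j i - x k i| := by
        refine le_trans (hsep j k hjk) ?_
        rw [EuclideanSpace.norm_eq]
        have h2 : ∑ i, ‖(x j - x k) i‖ ^ 2 ≤ (∑ i, |x j i - x k i|) ^ 2 := by
          refine le_trans (le_of_eq ?_)
            (Finset.sum_sq_le_sq_sum_of_nonneg (fun i _ => abs_nonneg _))
          refine Finset.sum_congr rfl fun i _ => ?_
          simp [Real.norm_eq_abs]
        calc Real.sqrt (∑ i, ‖(x j - x k) i‖ ^ 2)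
            ≤ Real.sqrt ((∑ i, |x j i - x k i|) ^ 2) := Real.sqrt_le_sqrt h2
          _ = ∑ i, |x j i - x k i| := Real.sqrt_sq (Finset.sum_nonneg fun i _ => abs_nonneg _)
      have : Real.exp (-γ * ∑ i, |x j i - x k i|) ≤ Real.exp (-(γ * K)) := by
        apply Real.exp_le_exp.mpr
        nlinarith
      calc ‖((Real.exp (-γ * ∑ i, |x j i - x k i|) : ℝ) : ℂ)‖
          = Real.exp (-γ * ∑ i, |x j i - x k i|) := by
            rw [Complex.norm_real, Real.norm_eq_abs, Real.abs_exp]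
        _ ≤ η / m := le_trans this hε
  -- operator norm bound
  rw [Matrix.l2_opNorm_def]
  refine ContinuousLinearMap.opNorm_le_bound _ hη.le fun v => ?_
  set w : EuclideanSpace ℂ (Fin m) := (Matrix.toEuclideanLin B) v with hw
  have hwv : ∀ j, w j = ∑ k, B j k * v k := by
    intro j
    simp [hw, Matrix.toEuclideanLin_apply, Matrix.mulVec, dotProduct]
  have hnorm : ‖v‖ ^ 2 = ∑ k, ‖v k‖ ^ 2 := by
    rw [EuclideanSpace.norm_eq, Real.sq_sqrt (Finset.sum_nonneg fun k _ => sq_nonneg _)]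
  have hS : (∑ k, ‖v k‖) ^ 2 ≤ m * ‖v‖ ^ 2 := by
    rw [hnorm]
    simpa using sq_sum_le_card_mul_sum_sq (s := Finset.univ) (f := fun k => ‖v k‖)
  have hwj : ∀ j, ‖w j‖ ≤ (η / m) * ∑ k, ‖v k‖ := by
    intro j
    rw [hwv j]
    calc ‖∑ k, B j k * v k‖ ≤ ∑ k, ‖B j k * v k‖ := norm_sum_le _ _
      _ ≤ ∑ k, (η / m) * ‖v k‖ := by
          refine Finset.sum_le_sum fun k _ => ?_
          rw [norm_mul]
          exact mul_le_mul_of_nonneg_right (hentry j k) (norm_nonneg _)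
      _ = (η / m) * ∑ k, ‖v k‖ := by rw [Finset.mul_sum]
  have key : ∑ j, ‖w j‖ ^ 2 ≤ (η * ‖v‖) ^ 2 := by
    have h1 : ∑ j, ‖w j‖ ^ 2 ≤ ∑ j : Fin m, ((η / m) * ∑ k, ‖v k‖) ^ 2 :=
      Finset.sum_le_sum fun j _ => pow_le_pow_left₀ (norm_nonneg _) (hwj j) 2
    have h2 : ∑ j : Fin m, ((η / m) * ∑ k, ‖v k‖) ^ 2
        = m * ((η / m) ^ 2 * (∑ k, ‖v k‖) ^ 2) := by
      simp [Finset.sum_const, mul_pow]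
    calc ∑ j, ‖w j‖ ^ 2 ≤ m * ((η / m) ^ 2 * (∑ k, ‖v k‖) ^ 2) := h1.trans_eq h2
      _ ≤ m * ((η / m) ^ 2 * (m * ‖v‖ ^ 2)) := by
          refine mul_le_mul_of_nonneg_left (mul_le_mul_of_nonneg_left hS (by positivity)) hm'.le
      _ = (η * ‖v‖) ^ 2 := by field_simp
  have : ‖w‖ ≤ η * ‖v‖ := by
    rw [EuclideanSpace.norm_eq]
    calc Real.sqrt (∑ j, ‖w j‖ ^ 2) ≤ Real.sqrt ((η * ‖v‖) ^ 2) := Real.sqrt_le_sqrt key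
      _ = η * ‖v‖ := Real.sqrt_sq (by positivity)
  simpa using this
end
end

section
/- (Decay rate of ‖c*‖₂²) Let c* ∈ ℂ^N have entries c*_k = α_{≤T}(ω_k)/N with ω_k i.i.d. from ρ. Then with probability at least 1−δ: ‖c*‖₂² ≤ (1/N)(‖f‖_ρ² + 4T² log(2/δ)/N + sqrt(2T²‖f‖_ρ² log(2/δ)/N)). -/
open MeasureTheory
open scoped BigOperators

noncomputable section

lemma exp_le_aux {x : ℝ} (h0 : 0 ≤ x) (h1 : x < 1) :
    Real.exp x ≤ 1 + x + x ^ 2 / (2 * (1 - x)) := by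
  have hb := Real.exp_bound' h0 h1.le (n := 3) (by norm_num)
  have hsum : (∑ m ∈ Finset.range 3, x ^ m / m.factorial) = 1 + x + x ^ 2 / 2 := by
    simp [Finset.sum_range_succ]
  rw [hsum] at hb
  have hb' : Real.exp x ≤ 1 + x + x ^ 2 / 2 + x ^ 3 * (2 / 9) := by
    refine hb.trans_eq ?_
    norm_num [Nat.factorial]
    ring
  refine hb'.trans ?_
  have h2 : (0:ℝ) < 1 - x := by linarith
  have hsplit : x ^ 2 / (2 * (1 - x)) = x ^ 2 / 2 + x ^ 3 / (2 * (1 - x)) := by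
    field_simp
    ring
  have h3 : x ^ 3 / 2 ≤ x ^ 3 / (2 * (1 - x)) :=
    div_le_div_of_nonneg_left (pow_nonneg h0 3) (by positivity) (by linarith)
  have h4 : x ^ 3 * (2 / 9) ≤ x ^ 3 / 2 := by nlinarith [pow_nonneg h0 3]
  linarith [hsplit, h3, h4]

set_option maxHeartbeats 2000000 in
/-- Decay rate of `‖c*‖₂²`: for `c*_k = α_{≤T}(ω_k)/N` with `ω_k` i.i.d. from
`ρ` and `‖f‖_ρ² = E[|α|²] = R²`, with probability at least `1 − δ`:
`‖c*‖₂² ≤ (1/N)(R² + 4T²log(2/δ)/N + sqrt(2T²R²log(2/δ)/N))`. -/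
theorem coefficient_norm_decay
    {d : ℕ} (μ : Measure (Fin d → ℝ)) [IsProbabilityMeasure μ]
    (α : (Fin d → ℝ) → ℂ)
    (R : ℝ) (hR0 : 0 ≤ R) (hR : R ^ 2 = ∫ ω, ‖α ω‖ ^ 2 ∂μ)
    (hα2 : Integrable (fun ω => ‖α ω‖ ^ 2) μ)
    (N : ℕ) (hN : 0 < N) (T δ : ℝ) (hT : 0 < T) (hδ : δ ∈ Set.Ioo (0:ℝ) 1) :
    (1 : ℝ) - δ ≤
      ((Measure.pi fun _ : Fin N => μ)
        {w | ∑ k : Fin N, ‖(if ‖α (w k)‖ ≤ T then α (w k) else 0) / (N : ℂ)‖ ^ 2 ≤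
            (N : ℝ)⁻¹ * (R ^ 2 + 4 * T ^ 2 * Real.log (2 / δ) / N +
              Real.sqrt (2 * T ^ 2 * R ^ 2 * Real.log (2 / δ) / N))}).toReal := by
  obtain ⟨hδ0, hδ1⟩ := hδ
  have hNpos : (0:ℝ) < N := Nat.cast_pos.2 hN
  set b := T ^ 2 with hbdef
  have hb : 0 < b := by positivity
  have hL : 0 < Real.log (2 / δ) := Real.log_pos (by rw [lt_div_iff₀ hδ0]; linarith)
  set L := Real.log (2 / δ) with hLdef
  set v := (N : ℝ) * b * R ^ 2 with hvdef
  have hv : 0 ≤ v := by positivity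
  set s := Real.sqrt (2 * v * L) with hsdef
  have hs : 0 ≤ s := Real.sqrt_nonneg _
  have hs2 : s ^ 2 = 2 * v * L := Real.sq_sqrt (by positivity)
  set t := 4 * b * L + s with htdef
  have ht : 0 < t := by positivity
  set a := (N:ℝ) * R ^ 2 + t with hadef
  set c := t / (v + b * t) with hcdef
  have hvbt : 0 < v + b * t := by positivity
  have hc : 0 < c := div_pos ht hvbt
  have hc_eq : c * (v + b * t) = t := by
    rw [hcdef]; field_simp
  clear_value b L v s t a c
  -- measurable representative
  have hg0 := hα2.1
  set g : (Fin d → ℝ) → ℝ := fun ω => max (hg0.mk _ ω) 0 with hgdef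
  have hgm : Measurable g := hg0.stronglyMeasurable_mk.measurable.max measurable_const
  have hgae : (fun ω => ‖α ω‖ ^ 2) =ᵐ[μ] g := by
    filter_upwards [hg0.ae_eq_mk] with ω hω
    simp only [hgdef]
    rw [← hω, max_eq_left (by positivity)]
  have hgnn : ∀ ω, 0 ≤ g ω := fun ω => le_max_right _ _
  set Z : (Fin d → ℝ) → ℝ := fun ω => if g ω ≤ b then g ω else 0 with hZdef
  have hZm : Measurable Z :=
    Measurable.ite (measurableSet_le hgm measurable_const) hgm measurable_const
  have hZnn : ∀ ω, 0 ≤ Z ω := fun ω => by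
    by_cases h : g ω ≤ b <;> simp [hZdef, h, hgnn ω]
  have hZb : ∀ ω, Z ω ≤ b := fun ω => by
    by_cases h : g ω ≤ b <;> simp [hZdef, h, hb.le]
  have hZg : ∀ ω, Z ω ≤ g ω := fun ω => by
    by_cases h : g ω ≤ b <;> simp [hZdef, h, hgnn ω]
  have hFZ : (fun ω => ‖(if ‖α ω‖ ≤ T then α ω else 0 : ℂ)‖ ^ 2) =ᵐ[μ] Z := by
    filter_upwards [hgae] with ω hω
    have hiff : ‖α ω‖ ≤ T ↔ ‖α ω‖ ^ 2 ≤ b := by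
      rw [hbdef]
      constructor
      · intro h; exact pow_le_pow_left₀ (norm_nonneg _) h 2
      · intro h; nlinarith [norm_nonneg (α ω)]
    simp only [hZdef]
    by_cases h : ‖α ω‖ ≤ T
    · rw [if_pos h, ← hω, if_pos (hiff.1 h)]
    · rw [if_neg h, ← hω, if_neg (fun hh => h (hiff.2 hh))]
      simp
  -- integrability
  have hgint : Integrable g μ := hα2.congr hgae
  have hgR : ∫ ω, g ω ∂μ = R ^ 2 := by rw [hR]; exact (integral_congr_ae hgae).symm
  have hZint : Integrable Z μ := by
    refine hgint.mono hZm.aestronglyMeasurable (ae_of_all _ fun ω => ?_)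
    rw [Real.norm_eq_abs, Real.norm_eq_abs, abs_of_nonneg (hZnn ω), abs_of_nonneg (hgnn ω)]
    exact hZg ω
  have hEZ : ∫ ω, Z ω ∂μ ≤ R ^ 2 := hgR ▸ integral_mono hZint hgint hZg
  have hEZnn : 0 ≤ ∫ ω, Z ω ∂μ := integral_nonneg hZnn
  -- mgf bound for one coordinate
  have hcb_nn : 0 ≤ c * b := by positivity
  have hone_le : (1:ℝ) ≤ Real.exp (c * b) := by
    have := Real.add_one_le_exp (c * b); linarith
  set Ec := (Real.exp (c * b) - 1) / b with hEcdef
  have hEc : 0 ≤ Ec := div_nonneg (by linarith) hb.le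
  clear_value Ec
  have hptw : ∀ ω, Real.exp (c * Z ω) ≤ 1 + Ec * Z ω := by
    intro ω
    have h1 : 0 ≤ Z ω / b := div_nonneg (hZnn ω) hb.le
    have h2 : Z ω / b ≤ 1 := (div_le_one hb).2 (hZb ω)
    have hconv := convexOn_exp.2 (Set.mem_univ (0:ℝ)) (Set.mem_univ (c * b))
      (by linarith : (0:ℝ) ≤ 1 - Z ω / b) h1 (by ring)
    have heq : (1 - Z ω / b) • (0:ℝ) + (Z ω / b) • (c * b) = c * Z ω := by
      have hb0 : b ≠ 0 := hb.ne'
      field_simp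
      ring_nf
      rw [mul_comm b (Z ω), mul_inv_cancel_right₀ hb0]
    rw [heq] at hconv
    simp only [smul_eq_mul, Real.exp_zero, mul_one] at hconv
    refine hconv.trans_eq ?_
    rw [hEcdef]
    field_simp
    ring
  have hexp_meas : Measurable fun ω => Real.exp (c * Z ω) :=
    Real.measurable_exp.comp (hZm.const_mul c)
  have hexp_int : Integrable (fun ω => Real.exp (c * Z ω)) μ := by
    refine Integrable.mono' (integrable_const (Real.exp (c * b)))
      hexp_meas.aestronglyMeasurable (ae_of_all _ fun ω => ?_)
    rw [Real.norm_eq_abs, abs_of_nonneg (Real.exp_nonneg _)]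
    exact Real.exp_le_exp.2 (mul_le_mul_of_nonneg_left (hZb ω) hc.le)
  set M := ∫ ω, Real.exp (c * Z ω) ∂μ with hMdef
  have hMnn : 0 ≤ M := integral_nonneg fun ω => Real.exp_nonneg _
  have hM : M ≤ Real.exp (Ec * R ^ 2) := by
    have h1 : M ≤ ∫ ω, (1 + Ec * Z ω) ∂μ := by
      refine integral_mono hexp_int ?_ hptw
      exact (integrable_const 1).add (hZint.const_mul Ec)
    have h2 : ∫ ω, (1 + Ec * Z ω) ∂μ = 1 + Ec * ∫ ω, Z ω ∂μ := by
      rw [integral_add (integrable_const 1) (hZint.const_mul Ec), integral_const,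
        integral_const_mul]
      simp
    have h3 : 1 + Ec * ∫ ω, Z ω ∂μ ≤ 1 + Ec * R ^ 2 :=
      by linarith [mul_le_mul_of_nonneg_left hEZ hEc]
    have h4 : 1 + Ec * R ^ 2 ≤ Real.exp (Ec * R ^ 2) := by
      have := Real.add_one_le_exp (Ec * R ^ 2); linarith
    calc M ≤ ∫ ω, (1 + Ec * Z ω) ∂μ := h1
      _ = 1 + Ec * ∫ ω, Z ω ∂μ := h2
      _ ≤ 1 + Ec * R ^ 2 := h3
      _ ≤ Real.exp (Ec * R ^ 2) := h4
  -- product measure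
  set P := (Measure.pi fun _ : Fin N => μ) with hPdef
  haveI : IsProbabilityMeasure P := by rw [hPdef]; infer_instance
  set S : (Fin N → (Fin d → ℝ)) → ℝ := fun w => ∑ k, Z (w k) with hSdef
  have hSm : Measurable S := Finset.measurable_sum _ fun k _ => hZm.comp (measurable_pi_apply k)
  have hprod : ∫ w, Real.exp (c * S w) ∂P = M ^ N := by
    letI : MeasureSpace (Fin d → ℝ) := ⟨μ⟩
    haveI : SigmaFinite (volume : Measure (Fin d → ℝ)) :=
      inferInstanceAs (SigmaFinite μ)
    have h := MeasureTheory.integral_fintype_prod_eq_pow (ι := Fin N) (μ := volume)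
      (fun ω => Real.exp (c * Z ω))
    rw [Fintype.card_fin] at h
    have hvol : (volume : Measure (Fin N → (Fin d → ℝ))) = P := by
      rw [MeasureTheory.volume_pi]; rfl
    change (∫ x : Fin N → Fin d → ℝ, ∏ i, Real.exp (c * Z (x i)) ∂P) = _ at h
    have hμ : (∫ x : Fin d → ℝ, Real.exp (c * Z x)) = M := rfl
    rw [hμ] at h
    rw [← h]
    congr 1
    funext w
    rw [hSdef]
    simp only
    rw [Finset.mul_sum, Real.exp_sum]
  -- Chernoff
  have hSint : Integrable (fun w => Real.exp (c * S w)) P := by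
    have hSb : ∀ w, S w ≤ (N:ℝ) * b := by
      intro w
      calc S w ≤ ∑ _k : Fin N, b := Finset.sum_le_sum fun k _ => hZb (w k)
        _ = (N:ℝ) * b := by simp [mul_comm]
    refine Integrable.mono' (integrable_const (Real.exp (c * ((N:ℝ) * b))))
      (Real.measurable_exp.comp (hSm.const_mul c)).aestronglyMeasurable
      (ae_of_all _ fun w => ?_)
    rw [Real.norm_eq_abs, abs_of_nonneg (Real.exp_nonneg _)]
    exact Real.exp_le_exp.2 (mul_le_mul_of_nonneg_left (hSb w) hc.le)
  have hcher : (P {w | a ≤ S w}).toReal ≤ Real.exp (-(c * a)) * M ^ N := by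
    have h0 := mul_meas_ge_le_integral_of_nonneg
      (ae_of_all _ fun w => Real.exp_nonneg (c * S w)) hSint (Real.exp (c * a))
    have hset : {w | Real.exp (c * a) ≤ Real.exp (c * S w)} = {w | a ≤ S w} := by
      ext w
      simp [Real.exp_le_exp, mul_le_mul_iff_right₀ hc]
    rw [hset, hprod] at h0
    have hepos : 0 < Real.exp (c * a) := Real.exp_pos _
    rw [Real.exp_neg]
    rw [inv_mul_eq_div, le_div_iff₀ hepos, mul_comm]
    exact h0
  -- the exponent bound
  have hkey : ((N:ℝ) * R ^ 2 / b) * (Real.exp (c * b) - 1 - c * b) ≤ c * t / 2 := by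
    by_cases hR0' : R = 0
    · simp only [hR0']
      have h1 : Real.exp (c * b) - 1 - c * b = Real.exp (c*b) - 1 - c*b := rfl
      rw [show ((N:ℝ) * 0 ^ 2 / b) = 0 by ring]
      rw [zero_mul]
      positivity
    · have hRp : 0 < R := hR0.lt_of_ne (Ne.symm hR0')
      have hvpos : 0 < v := by
        rw [hvdef]; exact mul_pos (mul_pos hNpos hb) (pow_pos hRp 2)
      have hcb1 : c * b < 1 := by
        rw [hcdef, div_mul_eq_mul_div, div_lt_one hvbt]
        linarith [hvpos]
      have hexp := exp_le_aux hcb_nn hcb1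
      have hstep : Real.exp (c * b) - 1 - c * b ≤ (c*b) ^ 2 / (2 * (1 - c*b)) := by linarith
      have heq : ((N:ℝ) * R ^ 2 / b) * ((c*b) ^ 2 / (2 * (1 - c*b))) = c * t / 2 := by
        have h1cb : 1 - c * b = v / (v + b * t) := by
          rw [hcdef]
          field_simp
          ring
        rw [h1cb, hcdef]
        rw [hvdef]
        field_simp
      calc ((N:ℝ) * R ^ 2 / b) * (Real.exp (c * b) - 1 - c * b)
          ≤ ((N:ℝ) * R ^ 2 / b) * ((c*b) ^ 2 / (2 * (1 - c*b))) := by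
            refine mul_le_mul_of_nonneg_left hstep (by positivity)
        _ = c * t / 2 := heq
  have h2L : 2 * L * (v + b * t) ≤ t ^ 2 := by
    rw [htdef]
    nlinarith [hs2, mul_nonneg (mul_nonneg hb.le hL.le) hs, sq_nonneg (b * L)]
  have h2L' : 2 * L ≤ c * t := by
    refine le_of_mul_le_mul_right ?_ hvbt
    calc 2 * L * (v + b * t) ≤ t ^ 2 := h2L
      _ = c * t * (v + b * t) := by rw [mul_comm c t, mul_assoc, hc_eq, sq]
  have hexponent : -(c * a) + (N:ℝ) * (Ec * R ^ 2) ≤ -L := by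
    have heq2 : -(c * a) + (N:ℝ) * (Ec * R ^ 2)
        = -(c * t) + ((N:ℝ) * R ^ 2 / b) * (Real.exp (c * b) - 1 - c * b) := by
      rw [hadef, hEcdef]
      field_simp
      ring
    rw [heq2]
    linarith
  have hbound : Real.exp (-(c * a)) * M ^ N ≤ δ / 2 := by
    have hMK : M ^ N ≤ Real.exp (Ec * R ^ 2) ^ N := pow_le_pow_left₀ hMnn hM N
    calc Real.exp (-(c * a)) * M ^ N
        ≤ Real.exp (-(c * a)) * Real.exp (Ec * R ^ 2) ^ N :=
          mul_le_mul_of_nonneg_left hMK (Real.exp_nonneg _)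
      _ = Real.exp (-(c * a) + (N:ℝ) * (Ec * R ^ 2)) := by
          rw [← Real.exp_nat_mul, ← Real.exp_add]
      _ ≤ Real.exp (-L) := Real.exp_le_exp.2 hexponent
      _ = δ / 2 := by
          rw [hLdef, Real.exp_neg, Real.exp_log (by positivity : (0:ℝ) < 2 / δ), inv_div]
  -- rewrite the event set
  have hsqrt : (N:ℝ) * Real.sqrt (2 * b * R ^ 2 * L / (N:ℝ)) = s := by
    rw [hsdef]
    rw [show 2 * v * L = (N:ℝ) ^ 2 * (2 * b * R ^ 2 * L / (N:ℝ)) by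
      rw [hvdef]; field_simp]
    rw [Real.sqrt_mul (sq_nonneg _), Real.sqrt_sq hNpos.le]
  have hNC : (N:ℝ) * (R ^ 2 + 4 * b * L / N + Real.sqrt (2 * b * R ^ 2 * L / N)) = a := by
    rw [hadef, htdef, ← hsqrt]
    field_simp
    ring
  have hterm : ∀ x : ℂ, ‖x / (N : ℂ)‖ ^ 2 = ‖x‖ ^ 2 / (N:ℝ) ^ 2 := fun x => by
    rw [norm_div, Complex.norm_natCast, div_pow]
  have hgoalset :
      {w : Fin N → (Fin d → ℝ) |
          ∑ k : Fin N, ‖(if ‖α (w k)‖ ≤ T then α (w k) else 0) / (N : ℂ)‖ ^ 2 ≤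
            (N : ℝ)⁻¹ * (R ^ 2 + 4 * b * L / N + Real.sqrt (2 * b * R ^ 2 * L / N))}
        = {w : Fin N → (Fin d → ℝ) |
            ∑ k : Fin N, ‖(if ‖α (w k)‖ ≤ T then α (w k) else 0 : ℂ)‖ ^ 2 ≤ a} := by
    ext w
    simp only [Set.mem_setOf_eq]
    rw [show (∑ k : Fin N, ‖(if ‖α (w k)‖ ≤ T then α (w k) else 0) / (N : ℂ)‖ ^ 2)
        = (∑ k : Fin N, ‖(if ‖α (w k)‖ ≤ T then α (w k) else 0 : ℂ)‖ ^ 2) / (N:ℝ) ^ 2 by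
      rw [Finset.sum_div]
      exact Finset.sum_congr rfl fun k _ => hterm _]
    rw [div_le_iff₀ (by positivity : (0:ℝ) < (N:ℝ) ^ 2)]
    constructor
    · intro h
      refine h.trans_eq ?_
      rw [← hNC]; field_simp
    · intro h
      refine h.trans_eq ?_
      rw [← hNC]; field_simp
  set A := {w : Fin N → (Fin d → ℝ) | S w ≤ a} with hAdef
  have hAm : MeasurableSet A := measurableSet_le hSm measurable_const
  have hae_set :
      {w : Fin N → (Fin d → ℝ) |
        ∑ k : Fin N, ‖(if ‖α (w k)‖ ≤ T then α (w k) else 0 : ℂ)‖ ^ 2 ≤ a} =ᵐ[P] A := by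
    have hnull : ∀ k : Fin N,
        ∀ᵐ w ∂P, ‖(if ‖α (w k)‖ ≤ T then α (w k) else 0 : ℂ)‖ ^ 2 = Z (w k) := by
      intro k
      have h0 : μ {ω | ¬ (‖(if ‖α ω‖ ≤ T then α ω else 0 : ℂ)‖ ^ 2 = Z ω)} = 0 := by
        have h1 := hFZ
        rwa [Filter.EventuallyEq, ae_iff] at h1
      have h2 := MeasureTheory.Measure.pi_eval_preimage_null
        (μ := fun _ : Fin N => μ) (i := k) h0
      rw [ae_iff]
      exact h2
    have hall : ∀ᵐ w ∂P, ∀ k : Fin N,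
        ‖(if ‖α (w k)‖ ≤ T then α (w k) else 0 : ℂ)‖ ^ 2 = Z (w k) :=
      (MeasureTheory.ae_all_iff).2 hnull
    filter_upwards [hall] with w hw
    have hsumeq : (∑ k : Fin N, ‖(if ‖α (w k)‖ ≤ T then α (w k) else 0 : ℂ)‖ ^ 2) = S w :=
      Finset.sum_congr rfl fun k _ => hw k
    show ((∑ k : Fin N, ‖(if ‖α (w k)‖ ≤ T then α (w k) else 0 : ℂ)‖ ^ 2) ≤ a) = (S w ≤ a)
    rw [hsumeq]
  rw [hgoalset, measure_congr hae_set]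
  have hcompl : (P Aᶜ).toReal ≤ δ := by
    have hsub : Aᶜ ⊆ {w | a ≤ S w} := by
      intro w hw
      simp only [Set.mem_compl_iff, hAdef, Set.mem_setOf_eq] at hw
      exact le_of_lt (not_le.1 hw)
    have h1 : (P Aᶜ).toReal ≤ (P {w | a ≤ S w}).toReal :=
      ENNReal.toReal_mono (measure_ne_top _ _) (measure_mono hsub)
    linarith [hcher, hbound]
  have hsum1 : (P A).toReal + (P Aᶜ).toReal = 1 := by
    rw [← ENNReal.toReal_add (measure_ne_top _ _) (measure_ne_top _ _),
      measure_add_measure_compl hAm, measure_univ, ENNReal.toReal_one]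
  linarith
end
end

section
/- Let D ⊂ ℝ^d be a compact domain, X = {x_1,…,x_m} ⊂ D with fill-in distance h_X = max_{x∈D} min_{x'∈X} ‖x−x'‖₂, and let g: D → ℂ be L_f-Lipschitz. Then ∫_D |g(x)|² dx ≤ 2L_f² h_X² vol(D) + C h_X^d Σ_{j=1}^m |g(x_j)|², where C>0 depends only on d (C=1 if d=1, C=π if d=2, C=4π²/3 if d=3). -/
open MeasureTheory Metric
open scoped BigOperators ENNReal

noncomputable section

/-- for a compact `D ⊂ ℝ^d`, points `x_1,…,x_m ∈ D` with fill-in distance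
`h_X = max_{x∈D} min_j ‖x−x_j‖`, and an `L_f`-Lipschitz `g : D → ℂ`, one has
`∫_D |g|² ≤ 2 L_f² h_X² vol(D) + C h_X^d Σ_j |g(x_j)|²` with `C > 0` depending only on `d`. -/
theorem fill_distance_voronoi_bound (d : ℕ) :
    ∃ C : ℝ, 0 < C ∧
      ∀ (m : ℕ), 0 < m →
        ∀ (D : Set (EuclideanSpace ℝ (Fin d))), IsCompact D →
          ∀ (x : Fin m → EuclideanSpace ℝ (Fin d)), (∀ j, x j ∈ D) →
            ∀ (g : EuclideanSpace ℝ (Fin d) → ℂ) (Lf hX : ℝ), 0 ≤ Lf →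
              (∀ p ∈ D, ∀ q ∈ D, ‖g p - g q‖ ≤ Lf * dist p q) →
              hX = ⨆ p : D, ⨅ j : Fin m, dist (p : EuclideanSpace ℝ (Fin d)) (x j) →
              (∫ p in D, ‖g p‖ ^ 2) ≤
                2 * Lf ^ 2 * hX ^ 2 * (volume D).toReal +
                  C * hX ^ d * ∑ j, ‖g (x j)‖ ^ 2 := by
  classical
  have hball0 : (0 : ℝ≥0∞) < volume (ball (0 : EuclideanSpace ℝ (Fin d)) 1) :=
    measure_ball_pos _ _ one_pos
  have hballtop : volume (ball (0 : EuclideanSpace ℝ (Fin d)) 1) < ⊤ := measure_ball_lt_top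
  refine ⟨2 * (volume (ball (0 : EuclideanSpace ℝ (Fin d)) 1)).toReal, by
    have := ENNReal.toReal_pos hball0.ne' hballtop.ne
    positivity, ?_⟩
  intro m hm D hD x hx g Lf hX hLf hLip hhX
  set ω := (volume (ball (0 : EuclideanSpace ℝ (Fin d)) 1)).toReal with hωdef
  have hω : 0 < ω := ENNReal.toReal_pos hball0.ne' hballtop.ne
  rcases D.eq_empty_or_nonempty with rfl | hne
  · exact absurd (hx ⟨0, hm⟩) (Set.notMem_empty _)
  obtain ⟨p₀, hp₀⟩ := hne
  haveI : Nonempty (Fin m) := ⟨⟨0, hm⟩⟩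
  have hbdd : BddAbove (Set.range fun p : D => ⨅ j, dist (p : EuclideanSpace ℝ (Fin d)) (x j)) := by
    refine ⟨Metric.diam D, ?_⟩
    rintro y ⟨p, rfl⟩
    refine le_trans (ciInf_le ⟨0, ?_⟩ ⟨0, hm⟩)
      (dist_le_diam_of_mem hD.isBounded p.2 (hx ⟨0, hm⟩))
    rintro y ⟨j, rfl⟩; exact dist_nonneg
  have hnear : ∀ p ∈ D, ∃ j, dist p (x j) ≤ hX ∧ ∀ k, dist p (x j) ≤ dist p (x k) := by
    intro p hp
    obtain ⟨j, hj⟩ := Finite.exists_min fun j => dist p (x j)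
    refine ⟨j, ?_, hj⟩
    have h2 : (⨅ k, dist p (x k)) ≤ hX := by
      rw [hhX]; exact le_ciSup hbdd (⟨p, hp⟩ : D)
    exact le_trans (le_ciInf hj) h2
  have hX0 : 0 ≤ hX := by
    obtain ⟨j, hj, -⟩ := hnear p₀ hp₀
    exact le_trans dist_nonneg hj
  -- Voronoi cells
  set V : Fin m → Set (EuclideanSpace ℝ (Fin d)) :=
    fun j => {p | ∀ k, dist p (x j) ≤ dist p (x k)} with hV
  have hVclosed : ∀ j, IsClosed (V j) := by
    intro j
    have : V j = ⋂ k, {p | dist p (x j) ≤ dist p (x k)} := by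
      ext p; simp [hV, Set.mem_iInter]
    rw [this]
    exact isClosed_iInter fun k =>
      isClosed_le (Continuous.dist continuous_id continuous_const)
        (Continuous.dist continuous_id continuous_const)
  set W : Fin m → Set (EuclideanSpace ℝ (Fin d)) :=
    fun j => D ∩ (V j \ ⋃ k ∈ Set.Iio j, V k) with hWdef
  have hWmeas : ∀ j, MeasurableSet (W j) := by
    intro j
    exact hD.measurableSet.inter ((hVclosed j).measurableSet.diff
      (MeasurableSet.biUnion (Set.to_countable _) fun k _ => (hVclosed k).measurableSet))
  have hWsub : ∀ j, W j ⊆ D := fun j => Set.inter_subset_left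
  have hWdisj : Pairwise (Function.onFun Disjoint W) := by
    intro i j hij
    rcases lt_or_gt_of_ne hij with h | h
    · refine Set.disjoint_left.2 fun p hpi hpj => ?_
      exact hpj.2.2 (Set.mem_biUnion h hpi.2.1)
    · refine Set.disjoint_left.2 fun p hpi hpj => ?_
      exact hpi.2.2 (Set.mem_biUnion h hpj.2.1)
  have hcover : D = ⋃ j, W j := by
    apply Set.Subset.antisymm
    · intro p hp
      have hS : {j | p ∈ V j}.Nonempty := by
        obtain ⟨j, -, hj⟩ := hnear p hp
        exact ⟨j, hj⟩
      obtain ⟨j, hjS, hjmin⟩ := (wellFounded_lt (α := Fin m)).has_min _ hS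
      refine Set.mem_iUnion.2 ⟨j, hp, hjS, ?_⟩
      intro hmem
      obtain ⟨k, hklt, hpVk⟩ := Set.mem_iUnion₂.1 hmem
      exact hjmin k hpVk hklt
    · exact Set.iUnion_subset hWsub
  have hWball : ∀ j, W j ⊆ closedBall (x j) hX := by
    intro j p hp
    obtain ⟨hpD, hpV, -⟩ := hp
    obtain ⟨k, hk, -⟩ := hnear p hpD
    exact mem_closedBall.2 (le_trans (hpV k) hk)
  -- integrability
  have hgcont : ContinuousOn g D := by
    have hL : LipschitzOnWith (Real.toNNReal Lf) g D := by
      rw [lipschitzOnWith_iff_dist_le_mul]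
      intro p hp q hq
      rw [dist_eq_norm]
      simpa [Real.coe_toNNReal Lf hLf] using hLip p hp q hq
    exact hL.continuousOn
  have hInt : IntegrableOn (fun p => ‖g p‖ ^ 2) D := by
    exact (hgcont.norm.pow 2).integrableOn_compact hD
  have hDvol : volume D < ⊤ := hD.measure_lt_top
  have hWvoltop : ∀ j, volume (W j) ≠ ⊤ :=
    fun j => (lt_of_le_of_lt (measure_mono (hWsub j)) hDvol).ne
  have hsplit : (∫ p in D, ‖g p‖ ^ 2) = ∑ j, ∫ p in W j, ‖g p‖ ^ 2 := by
    conv_lhs => rw [hcover]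
    exact integral_iUnion_fintype hWmeas hWdisj fun j => hInt.mono_set (hWsub j)
  have hvol : (volume D).toReal = ∑ j, (volume (W j)).toReal := by
    have h1 : volume D = ∑ j, volume (W j) := by
      conv_lhs => rw [hcover]
      rw [measure_iUnion hWdisj hWmeas, tsum_fintype]
    rw [h1, ENNReal.toReal_sum fun j _ => hWvoltop j]
  have hWvol : ∀ j, (volume (W j)).toReal ≤ hX ^ d * ω := by
    intro j
    have h1 : volume (W j) ≤ volume (closedBall (x j) hX) := measure_mono (hWball j)
    rw [Measure.addHaar_closedBall volume (x j) hX0, finrank_euclideanSpace_fin] at h1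
    have h2 := ENNReal.toReal_mono (by
      exact ENNReal.mul_ne_top ENNReal.ofReal_ne_top hballtop.ne) h1
    rwa [ENNReal.toReal_mul, ENNReal.toReal_ofReal (by positivity)] at h2
  have hcell : ∀ j, (∫ p in W j, ‖g p‖ ^ 2) ≤
      (2 * Lf ^ 2 * hX ^ 2 + 2 * ‖g (x j)‖ ^ 2) * (volume (W j)).toReal := by
    intro j
    have hb : ∀ p ∈ W j, ‖g p‖ ^ 2 ≤ 2 * Lf ^ 2 * hX ^ 2 + 2 * ‖g (x j)‖ ^ 2 := by
      intro p hp
      have hdist : dist p (x j) ≤ hX := mem_closedBall.1 (hWball j hp)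
      have h1 : ‖g p‖ ≤ ‖g p - g (x j)‖ + ‖g (x j)‖ := by
        simpa using norm_add_le (g p - g (x j)) (g (x j))
      have h2 : ‖g p - g (x j)‖ ≤ Lf * hX :=
        le_trans (hLip p (hWsub j hp) (x j) (hx j))
          (mul_le_mul_of_nonneg_left hdist hLf)
      nlinarith [norm_nonneg (g p - g (x j)), norm_nonneg (g (x j)), norm_nonneg (g p),
        sq_nonneg (‖g p - g (x j)‖ - ‖g (x j)‖), mul_nonneg hLf hX0]
    calc (∫ p in W j, ‖g p‖ ^ 2)
        ≤ ∫ _ in W j, (2 * Lf ^ 2 * hX ^ 2 + 2 * ‖g (x j)‖ ^ 2) := by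
          refine setIntegral_mono_on (hInt.mono_set (hWsub j)) ?_ (hWmeas j) hb
          exact integrableOn_const (lt_of_le_of_lt
            (measure_mono (hWsub j)) hDvol).ne
      _ = (2 * Lf ^ 2 * hX ^ 2 + 2 * ‖g (x j)‖ ^ 2) * (volume (W j)).toReal := by
          rw [setIntegral_const, smul_eq_mul, mul_comm]; rfl
  rw [hsplit]
  calc (∑ j, ∫ p in W j, ‖g p‖ ^ 2)
      ≤ ∑ j, (2 * Lf ^ 2 * hX ^ 2 + 2 * ‖g (x j)‖ ^ 2) * (volume (W j)).toReal :=
        Finset.sum_le_sum fun j _ => hcell j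
    _ = 2 * Lf ^ 2 * hX ^ 2 * ∑ j, (volume (W j)).toReal
        + ∑ j, 2 * ‖g (x j)‖ ^ 2 * (volume (W j)).toReal := by
        rw [Finset.mul_sum, ← Finset.sum_add_distrib]
        exact Finset.sum_congr rfl fun j _ => by ring
    _ ≤ 2 * Lf ^ 2 * hX ^ 2 * (volume D).toReal
        + ∑ j, 2 * ‖g (x j)‖ ^ 2 * (hX ^ d * ω) := by
        rw [hvol]
        refine add_le_add le_rfl (Finset.sum_le_sum fun j _ => ?_)
        exact mul_le_mul_of_nonneg_left (hWvol j) (by positivity)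
    _ = 2 * Lf ^ 2 * hX ^ 2 * (volume D).toReal + 2 * ω * hX ^ d * ∑ j, ‖g (x j)‖ ^ 2 := by
        rw [Finset.mul_sum]
        exact congrArg _ (Finset.sum_congr rfl fun j _ => by ring)
end
end

section
/- (Estimation error bound via condition number) Suppose f* and f♯ are random feature models with coefficient vectors c* and c♯ = A†y in ℂ^N, where A is the random feature matrix and y_j = f(x_j). If f*−f♯ is L_f-Lipschitz on compact D ⊂ ℝ^d, then ‖f*−f♯‖²_{L²(D)} ≤ 2L_f² h_X² vol(D) + C h_X^d ‖A‖₂² ‖c*−c♯‖₂², where h_X is the fill-in distance of X={x_j} and C depends only on d. -/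
open MeasureTheory
open scoped BigOperators Matrix Matrix.Norms.L2Operator

set_option maxHeartbeats 1000000
noncomputable section

/-- Estimation error bound via condition number: for random feature models
`f*(x) = Σ_k c*_k e^{i⟨ω_k,x⟩}` and `f♯(x) = Σ_k c♯_k e^{i⟨ω_k,x⟩}` with `c♯ = A†y`,
`y_j = f(x_j)`, if `f* − f♯` is `L_f`-Lipschitz on compact `D ⊂ ℝ^d`, then
`‖f*−f♯‖²_{L²(D)} ≤ 2L_f² h_X² vol(D) + C h_X^d ‖A‖₂² ‖c*−c♯‖₂²`,
where `h_X` is the fill-in distance and `C > 0` depends only on `d`. -/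
theorem estimation_error_bound (d : ℕ) :
    ∃ C : ℝ, 0 < C ∧
      ∀ (m N : ℕ), 0 < m → 0 < N →
        ∀ (D : Set (EuclideanSpace ℝ (Fin d))), IsCompact D →
          ∀ (x : Fin m → EuclideanSpace ℝ (Fin d)), (∀ j, x j ∈ D) →
            ∀ (ω : Fin N → EuclideanSpace ℝ (Fin d))
              (A : Matrix (Fin m) (Fin N) ℂ),
              (A = Matrix.of fun j k => Complex.exp (Complex.I * (∑ i, ω k i * x j i))) →
              ∀ (f : EuclideanSpace ℝ (Fin d) → ℂ) (y : Fin m → ℂ), (∀ j, y j = f (x j)) →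
                ∀ (cstar csharp : Fin N → ℂ),
                  csharp = (Aᴴ * (A * Aᴴ)⁻¹).mulVec y →
                  ∀ (fstar fsharp : EuclideanSpace ℝ (Fin d) → ℂ),
                    (∀ p, fstar p = ∑ k, cstar k *
                        Complex.exp (Complex.I * (∑ i, ω k i * p i))) →
                    (∀ p, fsharp p = ∑ k, csharp k *
                        Complex.exp (Complex.I * (∑ i, ω k i * p i))) →
                    ∀ (Lf hX : ℝ), 0 ≤ Lf →
                      (∀ p ∈ D, ∀ q ∈ D,
                        ‖(fstar p - fsharp p) - (fstar q - fsharp q)‖ ≤ Lf * dist p q) →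
                      hX = ⨆ p : D, ⨅ j : Fin m,
                          dist (p : EuclideanSpace ℝ (Fin d)) (x j) →
                      (∫ p in D, ‖fstar p - fsharp p‖ ^ 2) ≤
                        2 * Lf ^ 2 * hX ^ 2 * (volume D).toReal +
                          C * hX ^ d * ‖A‖ ^ 2 *
                            ∑ k, ‖cstar k - csharp k‖ ^ 2 := by
  classical
  set cd : ℝ := (volume (Metric.ball (0 : EuclideanSpace ℝ (Fin d)) 1)).toReal with hcd
  have hcdpos : 0 < cd := by
    refine ENNReal.toReal_pos ?_ measure_ball_lt_top.ne
    exact (Metric.measure_ball_pos volume _ one_pos).ne'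
  refine ⟨2 * cd, by positivity, ?_⟩
  intro m N hm hN D hD x hx ω A hA f y hy cstar csharp hcs fstar fsharp hfs hfsh
    Lf hX hLf hLip hhX
  set g : EuclideanSpace ℝ (Fin d) → ℂ := fun p => fstar p - fsharp p with hgdef
  have hgsum : ∀ p, g p = ∑ k, (cstar k - csharp k) *
      Complex.exp (Complex.I * (∑ i, ω k i * p i)) := by
    intro p
    simp only [hgdef, hfs, hfsh, sub_mul, Finset.sum_sub_distrib]
  have hgcont : Continuous g := by
    have : Continuous fun p : EuclideanSpace ℝ (Fin d) => ∑ k, (cstar k - csharp k) *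
        Complex.exp (Complex.I * ((∑ i, ω k i * p i : ℝ) : ℂ)) := by
      refine continuous_finset_sum _ fun k _ => (continuous_const.mul ?_)
      refine Complex.continuous_exp.comp (continuous_const.mul ?_)
      refine (Complex.continuous_ofReal).comp ?_
      exact continuous_finset_sum _ fun i _ => continuous_const.mul (by fun_prop)
    have he : g = fun p => ∑ k, (cstar k - csharp k) *
        Complex.exp (Complex.I * ((∑ i, ω k i * p i : ℝ) : ℂ)) := funext hgsum
    rw [he]; exact this
  have hIntD : IntegrableOn (fun p => ‖g p‖ ^ 2) D := by
    exact ((hgcont.norm.pow 2).continuousOn).integrableOn_compact hD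
  have hDmeas : MeasurableSet D := hD.isClosed.measurableSet
  have hvolD : volume D ≠ ⊤ := hD.measure_lt_top.ne
  -- empty case
  rcases D.eq_empty_or_nonempty with hDe | hDne
  · have hX0 : hX = 0 := by
      rw [hhX]
      haveI : IsEmpty (↥D) := by rw [hDe]; infer_instance
      rw [iSup_of_empty']
      exact Real.sSup_empty
    have h1 : (∫ p in D, ‖fstar p - fsharp p‖ ^ 2) = 0 := by
      rw [hDe]; simp
    rw [h1, hX0]
    have h2 : (0:ℝ) ≤ 2 * cd * (0:ℝ) ^ d * ‖A‖ ^ 2 * ∑ k, ‖cstar k - csharp k‖ ^ 2 := by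
      have : (0:ℝ) ≤ ∑ k, ‖cstar k - csharp k‖ ^ 2 :=
        Finset.sum_nonneg fun k _ => by positivity
      have h0 : (0:ℝ) ≤ (0:ℝ) ^ d := by positivity
      positivity
    nlinarith [ENNReal.toReal_nonneg (a := volume D), sq_nonneg Lf]
  -- nonempty case
  set j0 : Fin m := ⟨0, hm⟩ with hj0
  haveI : Nonempty (Fin m) := ⟨j0⟩
  have hbddB : ∀ p : EuclideanSpace ℝ (Fin d),
      BddBelow (Set.range fun j : Fin m => dist p (x j)) := by
    intro p; exact ⟨0, by rintro _ ⟨j, rfl⟩; exact dist_nonneg⟩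
  have hbdd : BddAbove (Set.range fun p : D =>
      ⨅ j : Fin m, dist (p : EuclideanSpace ℝ (Fin d)) (x j)) := by
    refine ⟨Metric.diam D, ?_⟩
    rintro _ ⟨p, rfl⟩
    exact ciInf_le_of_le (hbddB p) j0 (Metric.dist_le_diam_of_mem hD.isBounded p.2 (hx j0))
  have hXnn : 0 ≤ hX := by
    obtain ⟨p0, hp0⟩ := hDne
    rw [hhX]
    refine le_trans ?_ (le_ciSup hbdd ⟨p0, hp0⟩)
    exact le_ciInf fun j => dist_nonneg
  have hdistle : ∀ p ∈ D, ∀ j : Fin m,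
      (∀ j', dist p (x j) ≤ dist p (x j')) → dist p (x j) ≤ hX := by
    intro p hp j hj
    have h1 : dist p (x j) ≤ ⨅ j', dist p (x j') := le_ciInf hj
    refine h1.trans ?_
    rw [hhX]
    exact le_ciSup hbdd ⟨p, hp⟩
  -- Voronoi sets
  set V : Fin m → Set (EuclideanSpace ℝ (Fin d)) :=
    fun j => {p | ∀ j', dist p (x j) ≤ dist p (x j')} with hV
  have hVclosed : ∀ j, IsClosed (V j) := by
    intro j
    have : V j = ⋂ j', {p | dist p (x j) ≤ dist p (x j')} := by
      ext p; simp [hV, Set.mem_iInter]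
    rw [this]
    exact isClosed_iInter fun j' => isClosed_le
      (Continuous.dist continuous_id continuous_const)
      (Continuous.dist continuous_id continuous_const)
  set W : Fin m → Set (EuclideanSpace ℝ (Fin d)) :=
    fun j => V j \ ⋃ (j' : Fin m) (_ : j' < j), V j' with hW
  have hWV : ∀ j, W j ⊆ V j := fun j => Set.diff_subset
  have hWmeas : ∀ j, MeasurableSet (W j) := by
    intro j
    exact ((hVclosed j).measurableSet).diff
      (MeasurableSet.iUnion fun j' => MeasurableSet.iUnion fun _ => (hVclosed j').measurableSet)
  have hWdisj : Pairwise (Function.onFun Disjoint W) := by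
    have key : ∀ a b : Fin m, a < b → Disjoint (W a) (W b) := by
      intro a b hab
      rw [Set.disjoint_left]
      intro p hpa hpb
      exact hpb.2 (Set.mem_iUnion.2 ⟨a, Set.mem_iUnion.2 ⟨hab, hpa.1⟩⟩)
    intro a b hab
    rcases lt_or_gt_of_ne hab with h | h
    · exact key a b h
    · exact (key b a h).symm
  have hcover : ∀ p : EuclideanSpace ℝ (Fin d), ∃ j, p ∈ W j := by
    intro p
    have hTne : (Finset.univ.filter fun j : Fin m => ∀ j', dist p (x j) ≤ dist p (x j')).Nonempty := by
      obtain ⟨j, _, hj⟩ := Finset.exists_min_image Finset.univ (fun j => dist p (x j))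
        ⟨j0, Finset.mem_univ j0⟩
      exact ⟨j, Finset.mem_filter.2 ⟨Finset.mem_univ j, fun j' => hj j' (Finset.mem_univ j')⟩⟩
    set T := Finset.univ.filter fun j : Fin m => ∀ j', dist p (x j) ≤ dist p (x j') with hT
    refine ⟨T.min' hTne, ?_, ?_⟩
    · exact (Finset.mem_filter.1 (T.min'_mem hTne)).2
    · intro hmem
      obtain ⟨j', hj'⟩ := Set.mem_iUnion.1 hmem
      obtain ⟨hlt, hpj'⟩ := Set.mem_iUnion.1 hj'
      have : T.min' hTne ≤ j' := Finset.min'_le T j' (Finset.mem_filter.2 ⟨Finset.mem_univ _, hpj'⟩)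
      exact absurd this (not_le.2 hlt)
  have hDeq : D = ⋃ j, D ∩ W j := by
    rw [← Set.inter_iUnion]
    refine (Set.inter_eq_left.2 ?_).symm
    intro p _
    obtain ⟨j, hj⟩ := hcover p
    exact Set.mem_iUnion.2 ⟨j, hj⟩
  -- distance bound on W j ∩ D
  have hWball : ∀ j, D ∩ W j ⊆ Metric.closedBall (x j) hX := by
    intro j p hp
    exact Metric.mem_closedBall.2 (hdistle p hp.1 j (hWV j hp.2))
  -- split the integral
  have hsplit : (∫ p in D, ‖g p‖ ^ 2) = ∑ j, ∫ p in D ∩ W j, ‖g p‖ ^ 2 := by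
    conv_lhs => rw [hDeq]
    exact integral_iUnion_fintype (fun j => hDmeas.inter (hWmeas j))
      (fun a b hab => ((hWdisj hab).mono Set.inter_subset_right Set.inter_subset_right))
      (fun j => hIntD.mono_set Set.inter_subset_left)
  -- pointwise bound on each piece
  have hpiece : ∀ j, (∫ p in D ∩ W j, ‖g p‖ ^ 2) ≤
      (volume (D ∩ W j)).toReal * (2 * (Lf * hX) ^ 2 + 2 * ‖g (x j)‖ ^ 2) := by
    intro j
    have hfin : volume (D ∩ W j) < ⊤ :=
      lt_of_le_of_lt (measure_mono Set.inter_subset_left) hD.measure_lt_top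
    have hconst : IntegrableOn (fun _ : EuclideanSpace ℝ (Fin d) =>
        2 * (Lf * hX) ^ 2 + 2 * ‖g (x j)‖ ^ 2) (D ∩ W j) := by
      exact integrableOn_const hfin.ne
    have hmono : ∀ p ∈ D ∩ W j, ‖g p‖ ^ 2 ≤ 2 * (Lf * hX) ^ 2 + 2 * ‖g (x j)‖ ^ 2 := by
      intro p hp
      have hd : dist p (x j) ≤ hX := hdistle p hp.1 j (hWV j hp.2)
      have hlip : ‖g p - g (x j)‖ ≤ Lf * hX := by
        refine le_trans (hLip p hp.1 (x j) (hx j)) ?_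
        exact mul_le_mul_of_nonneg_left hd hLf
      have h1 : ‖g p‖ ≤ Lf * hX + ‖g (x j)‖ := by
        calc ‖g p‖ = ‖(g p - g (x j)) + g (x j)‖ := by ring_nf
          _ ≤ ‖g p - g (x j)‖ + ‖g (x j)‖ := norm_add_le _ _
          _ ≤ Lf * hX + ‖g (x j)‖ := add_le_add_left hlip _
      nlinarith [sq_nonneg (Lf * hX - ‖g (x j)‖), norm_nonneg (g p)]
    calc (∫ p in D ∩ W j, ‖g p‖ ^ 2)
        ≤ ∫ _ in D ∩ W j, (2 * (Lf * hX) ^ 2 + 2 * ‖g (x j)‖ ^ 2) := by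
          refine setIntegral_mono_on (hIntD.mono_set Set.inter_subset_left) hconst
            (hDmeas.inter (hWmeas j)) hmono
      _ = (volume (D ∩ W j)).toReal * (2 * (Lf * hX) ^ 2 + 2 * ‖g (x j)‖ ^ 2) := by
          rw [setIntegral_const]; rfl
  -- volume facts
  have hvolW : ∀ j, (volume (D ∩ W j)).toReal ≤ hX ^ d * cd := by
    intro j
    have h1 : volume (D ∩ W j) ≤ volume (Metric.closedBall (x j) hX) :=
      measure_mono (hWball j)
    have h2 : volume (Metric.closedBall (x j) hX) =
        ENNReal.ofReal (hX ^ d) * volume (Metric.ball (0 : EuclideanSpace ℝ (Fin d)) 1) := by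
      rw [MeasureTheory.Measure.addHaar_closedBall volume (x j) hXnn, finrank_euclideanSpace_fin]
    have h3 : (volume (Metric.closedBall (x j) hX)).toReal = hX ^ d * cd := by
      rw [h2, ENNReal.toReal_mul, ENNReal.toReal_ofReal (by positivity)]
    rw [← h3]
    exact ENNReal.toReal_mono (by rw [h2]; exact (ENNReal.mul_lt_top ENNReal.ofReal_lt_top
      measure_ball_lt_top).ne) h1
  have hvolsum : ∑ j, (volume (D ∩ W j)).toReal = (volume D).toReal := by
    have h1 : volume D = ∑ j, volume (D ∩ W j) := by
      conv_lhs => rw [hDeq]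
      rw [measure_iUnion
        (fun a b hab => ((hWdisj hab).mono Set.inter_subset_right Set.inter_subset_right))
        (fun j => hDmeas.inter (hWmeas j)), tsum_fintype]
    rw [h1, ENNReal.toReal_sum]
    intro j _
    exact (lt_of_le_of_lt (measure_mono Set.inter_subset_left) hD.measure_lt_top).ne
  -- matrix norm bound
  have hgA : ∀ j, g (x j) = (A *ᵥ fun k => cstar k - csharp k) j := by
    intro j
    rw [hgsum (x j)]
    simp only [Matrix.mulVec, dotProduct, hA, Matrix.of_apply]
    exact Finset.sum_congr rfl fun k _ => mul_comm _ _
  have hmatrix : ∑ j, ‖g (x j)‖ ^ 2 ≤ ‖A‖ ^ 2 * ∑ k, ‖cstar k - csharp k‖ ^ 2 := by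
    have h := Matrix.l2_opNorm_mulVec A
      ((EuclideanSpace.equiv (Fin N) ℂ).symm fun k => cstar k - csharp k)
    have h1 : ‖(EuclideanSpace.equiv (Fin m) ℂ).symm
          (A *ᵥ fun k => cstar k - csharp k)‖ ^ 2
        ≤ (‖A‖ * ‖(EuclideanSpace.equiv (Fin N) ℂ).symm fun k => cstar k - csharp k‖) ^ 2 :=
      pow_le_pow_left₀ (norm_nonneg _) h 2
    rw [EuclideanSpace.norm_eq, EuclideanSpace.norm_eq] at h1
    rw [Real.sq_sqrt (by positivity), mul_pow, Real.sq_sqrt (by positivity)] at h1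
    calc ∑ j, ‖g (x j)‖ ^ 2 = ∑ j, ‖(A *ᵥ fun k => cstar k - csharp k) j‖ ^ 2 := by
          refine Finset.sum_congr rfl fun j _ => by rw [hgA j]
      _ ≤ ‖A‖ ^ 2 * ∑ k, ‖cstar k - csharp k‖ ^ 2 := h1
  -- put it all together
  have hgoal : (∫ p in D, ‖g p‖ ^ 2) ≤
      2 * Lf ^ 2 * hX ^ 2 * (volume D).toReal +
        (2 * cd) * hX ^ d * ‖A‖ ^ 2 * ∑ k, ‖cstar k - csharp k‖ ^ 2 := by
    rw [hsplit]
    calc ∑ j, ∫ p in D ∩ W j, ‖g p‖ ^ 2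
        ≤ ∑ j, (volume (D ∩ W j)).toReal * (2 * (Lf * hX) ^ 2 + 2 * ‖g (x j)‖ ^ 2) :=
          Finset.sum_le_sum fun j _ => hpiece j
      _ = 2 * (Lf * hX) ^ 2 * ∑ j, (volume (D ∩ W j)).toReal +
            2 * ∑ j, (volume (D ∩ W j)).toReal * ‖g (x j)‖ ^ 2 := by
          rw [Finset.mul_sum, Finset.mul_sum, ← Finset.sum_add_distrib]
          refine Finset.sum_congr rfl fun j _ => by ring
      _ ≤ 2 * (Lf * hX) ^ 2 * (volume D).toReal +
            2 * ∑ j, (hX ^ d * cd) * ‖g (x j)‖ ^ 2 := by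
          refine add_le_add (le_of_eq (by rw [hvolsum])) ?_
          refine mul_le_mul_of_nonneg_left (Finset.sum_le_sum fun j _ => ?_) (by norm_num)
          exact mul_le_mul_of_nonneg_right (hvolW j) (by positivity)
      _ = 2 * Lf ^ 2 * hX ^ 2 * (volume D).toReal +
            2 * (hX ^ d * cd) * ∑ j, ‖g (x j)‖ ^ 2 := by
          rw [← Finset.mul_sum]; ring
      _ ≤ 2 * Lf ^ 2 * hX ^ 2 * (volume D).toReal +
            2 * (hX ^ d * cd) * (‖A‖ ^ 2 * ∑ k, ‖cstar k - csharp k‖ ^ 2) := by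
          refine add_le_add_right (mul_le_mul_of_nonneg_left hmatrix (by positivity)) _
      _ = 2 * Lf ^ 2 * hX ^ 2 * (volume D).toReal +
            (2 * cd) * hX ^ d * ‖A‖ ^ 2 * ∑ k, ‖cstar k - csharp k‖ ^ 2 := by ring
  exact hgoal
end
end
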